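/- Among the eight ordered triples of directed types (X,Y,Z) for which both (X,Y) and (Y,Z) belong to the six allowed pairs (→1,←1), (←1,→1), (→1,→2), (→2,←2), (←2,←1), (←2,→2), exactly six are realized by a minimal conformation of length 7 (whose three windows Γ₃,Γ₄,Γ₅ have types X,Y,Z); the two triples (→2,←2,→2) and (←2,→2,←2) are realized by no minimal conformation of length 7. -/
import Mathlib


/-- Points of the cubic lattice `ℤ³`. -/
abbrev P3 : Type := Fin 3 → ℤ

def e1 : P3 := ![1, 0, 0]
def e2 : P3 := ![0, 1, 0]
def e3 : P3 := ![0, 0, 1]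

/-- Squared Euclidean norm of an integer vector; it equals `1` iff the
Euclidean norm equals `1`. -/
def sqNorm (v : P3) : ℤ := ∑ k, (v k) ^ 2

/-- A conformation of length `N`: an injective map on `{1, …, N}` whose
consecutive steps have Euclidean length one. -/
def IsConformation (N : ℕ) (Γ : ℕ → P3) : Prop :=
  Set.InjOn Γ (Set.Icc 1 N) ∧ ∀ i, 1 ≤ i → i < N → sqNorm (Γ (i + 1) - Γ i) = 1

/-- A lattice rotation: an orthogonal integer matrix of determinant one
(equivalently, a linear isometry of `ℝ³` mapping `ℤ³` onto `ℤ³` with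
determinant one). -/
def IsLatticeRotation (R : Matrix (Fin 3) (Fin 3) ℤ) : Prop :=
  R.transpose * R = 1 ∧ R.det = 1

/-- Equivalence of length-5 conformations: `Δ' k = R (Δ k) + t` for a lattice
rotation `R` and translation `t ∈ ℤ³`. -/
def Equiv5 (Δ Δ' : Fin 5 → P3) : Prop :=
  ∃ (R : Matrix (Fin 3) (Fin 3) ℤ) (t : P3),
    IsLatticeRotation R ∧ ∀ k, Δ' k = R.mulVec (Δ k) + t

/-- Reversal of a length-5 conformation (`k ↦ Δ (6 - k)` in 1-based indexing). -/
def rev5 (Δ : Fin 5 → P3) : Fin 5 → P3 := fun k => Δ k.rev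

/-- Conformation 1: vertices (0,0,0), (1,0,0), (1,1,0), (0,1,0), (0,1,1). -/
def conf1 : Fin 5 → P3 := ![![0, 0, 0], ![1, 0, 0], ![1, 1, 0], ![0, 1, 0], ![0, 1, 1]]

/-- Conformation 2: vertices (0,0,0), (0,1,0), (−1,1,0), (−1,1,1), (−1,0,1). -/
def conf2 : Fin 5 → P3 := ![![0, 0, 0], ![0, 1, 0], ![-1, 1, 0], ![-1, 1, 1], ![-1, 0, 1]]

/-- The `i`-th window of `Γ`: the 5-tuple `(Γ(i-2), …, Γ(i+2))`. -/
def window (Γ : ℕ → P3) (i : ℕ) : Fin 5 → P3 := fun k => Γ (i - 2 + (k : ℕ))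

/-- `Φ(Δ) = 1`: the 5-tuple `Δ` or its reversal is equivalent to
conformation 1 or to conformation 2. -/
def WindowGood (Δ : Fin 5 → P3) : Prop :=
  Equiv5 Δ conf1 ∨ Equiv5 (rev5 Δ) conf1 ∨ Equiv5 Δ conf2 ∨ Equiv5 (rev5 Δ) conf2

open Classical in
/-- The function `Φ` on length-5 conformations. -/
noncomputable def Phi (Δ : Fin 5 → P3) : ℤ := if WindowGood Δ then 1 else 0

/-- The energy `E₅(Γ) = −Σ_{i=3}^{N−2} Φ(Γ_i)`. -/
noncomputable def E5 (N : ℕ) (Γ : ℕ → P3) : ℤ :=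
  -∑ i ∈ Finset.Icc 3 (N - 2), Phi (window Γ i)

/-- A minimal conformation: a conformation all of whose windows satisfy `Φ = 1`. -/
def IsMinimal (N : ℕ) (Γ : ℕ → P3) : Prop :=
  IsConformation N Γ ∧ ∀ i, 3 ≤ i → i ≤ N - 2 → WindowGood (window Γ i)

/-- The walk starting at the origin (in 1-based indexing) whose steps
cyclically repeat the given list. -/
def cyclicWalk (steps : List P3) : ℕ → P3
  | 0 => 0
  | 1 => 0
  | n + 2 => cyclicWalk steps (n + 1) + steps.getD (n % steps.length) 0

/-- The 16-term step sequence of the lattice α-helix. -/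
def alphaStepList : List P3 :=
  [e1, e2, -e1, e3, -e2, e1, e2, e3, -e1, -e2, e1, e3, e2, -e1, -e2, e3]

/-- The 4-term step sequence of the lattice β-strand. -/
def betaStepList : List P3 := [e1, e2, -e1, e3]

/-- The lattice α-helix (`H(1) = 0`, steps cyclically repeating `alphaStepList`). -/
def alphaHelix : ℕ → P3 := cyclicWalk alphaStepList

/-- The lattice β-strand (`B(1) = 0`, steps cyclically repeating `betaStepList`). -/
def betaStrand : ℕ → P3 := cyclicWalk betaStepList

/-- The four directed types of windows. -/
inductive DType : Type
  | r1  -- →1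
  | l1  -- ←1
  | r2  -- →2
  | l2  -- ←2
deriving DecidableEq

/-- A window `Δ` has directed type `→1` (resp. `→2`) if it is equivalent to
conformation 1 (resp. 2), and `←1` (resp. `←2`) if its reversal is. -/
def HasType (Δ : Fin 5 → P3) : DType → Prop
  | DType.r1 => Equiv5 Δ conf1
  | DType.l1 => Equiv5 (rev5 Δ) conf1
  | DType.r2 => Equiv5 Δ conf2
  | DType.l2 => Equiv5 (rev5 Δ) conf2

/-- The six allowed ordered pairs of directed types of consecutive windows:
(→1,←1), (←1,→1), (→1,→2), (→2,←2), (←2,←1), (←2,→2). -/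
def allowedPairs : List (DType × DType) :=
  [(DType.r1, DType.l1), (DType.l1, DType.r1), (DType.r1, DType.r2),
   (DType.r2, DType.l2), (DType.l2, DType.l1), (DType.l2, DType.r2)]

/-- `w` is the type sequence of `Γ` (a conformation of length `N`):
`w` has length `N − 4` and its `j`-th letter is the directed type of the
window `Γ_{3+j}`, `j = 0, …, N−5`. -/
def HasTypeSeq (N : ℕ) (Γ : ℕ → P3) (w : List DType) : Prop :=
  w.length = N - 4 ∧ ∀ j (h : j < w.length), HasType (window Γ (3 + j)) (w.get ⟨j, h⟩)

/-- The word `α = →1→2←2←1`. -/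
def wordAlpha : List DType := [DType.r1, DType.r2, DType.l2, DType.l1]

/-- The word `β = →1←1`. -/
def wordBeta : List DType := [DType.r1, DType.l1]

/-- `v` is a finite concatenation of copies of the words `α` and `β`. -/
def IsABConcat (v : List DType) : Prop :=
  ∃ L : List (List DType), (∀ u ∈ L, u = wordAlpha ∨ u = wordBeta) ∧ v = L.flatten

/-- A word is admissible if it is a contiguous subword (factor) of some finite
concatenation of copies of `α` and `β`. -/
def Admissible (w : List DType) : Prop := ∃ v, IsABConcat v ∧ w <:+: v

/-- The two kinds of monomers. -/
inductive AB : Type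
  | A
  | B
deriving DecidableEq

/-- The number of occurrences of the letter `c` in the `i`-th 5-tuple
`S(i−2), …, S(i+2)` of the sequence `S`. -/
def countLetter (c : AB) (S : ℕ → AB) (i : ℕ) : ℕ :=
  ((Finset.Icc (i - 2) (i + 2)).filter fun k => S k = c).card

open Classical in
/-- `Φ₁(Δ) = 1` iff `Δ` or its reversal is equivalent to conformation 1. -/
noncomputable def Phi1 (Δ : Fin 5 → P3) : ℝ :=
  if Equiv5 Δ conf1 ∨ Equiv5 (rev5 Δ) conf1 then 1 else 0

open Classical in
/-- `Φ₂(Δ) = 1` iff `Δ` or its reversal is equivalent to conformation 2. -/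
noncomputable def Phi2 (Δ : Fin 5 → P3) : ℝ :=
  if Equiv5 Δ conf2 ∨ Equiv5 (rev5 Δ) conf2 then 1 else 0

/-- The heteropolymer energy
`E₅′(S,Γ) = −Σᵢ [#_B(Sᵢ)(Φ₁(Γᵢ) + ε Φ₂(Γᵢ)) + #_A(Sᵢ)(Φ₂(Γᵢ) + ε Φ₁(Γᵢ))]`. -/
noncomputable def E5' (ε : ℝ) (S : ℕ → AB) (N : ℕ) (Γ : ℕ → P3) : ℝ :=
  -∑ i ∈ Finset.Icc 3 (N - 2),
    ((countLetter AB.B S i : ℝ) * (Phi1 (window Γ i) + ε * Phi2 (window Γ i)) +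
      (countLetter AB.A S i : ℝ) * (Phi2 (window Γ i) + ε * Phi1 (window Γ i)))

def mkW (l : List P3) : ℕ → P3 := fun n => l.getD (n-1) ![0,0,0]
def Wb0 : ℕ → P3 := mkW [![0,0,0],![1,0,0],![1,1,0],![0,1,0],![0,1,1],![1,1,1],![1,2,1]]
def Wb1 : ℕ → P3 := mkW [![0,0,0],![0,1,0],![-1,1,0],![-1,1,1],![0,1,1],![0,2,1],![-1,2,1]]
def Wa0 : ℕ → P3 := mkW [![0,0,0],![1,0,0],![1,1,0],![0,1,0],![0,1,1],![0,0,1],![1,0,1]]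
def Wa1 : ℕ → P3 := mkW [![0,0,0],![0,1,0],![-1,1,0],![-1,1,1],![-1,0,1],![0,0,1],![0,1,1]]
def Wa2 : ℕ → P3 := mkW [![0,0,0],![-1,0,0],![-1,0,1],![-1,-1,1],![0,-1,1],![0,0,1],![0,0,2]]
def Wa3 : ℕ → P3 := mkW [![0,0,0],![0,0,1],![0,-1,1],![1,-1,1],![1,0,1],![1,0,2],![0,0,2]]
lemma goodOf {Δ : Fin 5 → P3} {ty : DType} (h : HasType Δ ty) : WindowGood Δ := by
  cases ty
  · exact Or.inl h
  · exact Or.inr (Or.inl h)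
  · exact Or.inr (Or.inr (Or.inl h))
  · exact Or.inr (Or.inr (Or.inr h))

lemma conf_Wb0 : IsConformation 7 Wb0 := by
  constructor
  · intro a ha b hb hab
    obtain ⟨ha1, ha2⟩ := Set.mem_Icc.mp ha
    obtain ⟨hb1, hb2⟩ := Set.mem_Icc.mp hb
    interval_cases a <;> interval_cases b <;> first | rfl | (exact absurd hab (by decide))
  · intro i h1 h2; interval_cases i <;> decide

lemma conf_Wb1 : IsConformation 7 Wb1 := by
  constructor
  · intro a ha b hb hab
    obtain ⟨ha1, ha2⟩ := Set.mem_Icc.mp ha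
    obtain ⟨hb1, hb2⟩ := Set.mem_Icc.mp hb
    interval_cases a <;> interval_cases b <;> first | rfl | (exact absurd hab (by decide))
  · intro i h1 h2; interval_cases i <;> decide

lemma conf_Wa0 : IsConformation 7 Wa0 := by
  constructor
  · intro a ha b hb hab
    obtain ⟨ha1, ha2⟩ := Set.mem_Icc.mp ha
    obtain ⟨hb1, hb2⟩ := Set.mem_Icc.mp hb
    interval_cases a <;> interval_cases b <;> first | rfl | (exact absurd hab (by decide))
  · intro i h1 h2; interval_cases i <;> decide

lemma conf_Wa1 : IsConformation 7 Wa1 := by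
  constructor
  · intro a ha b hb hab
    obtain ⟨ha1, ha2⟩ := Set.mem_Icc.mp ha
    obtain ⟨hb1, hb2⟩ := Set.mem_Icc.mp hb
    interval_cases a <;> interval_cases b <;> first | rfl | (exact absurd hab (by decide))
  · intro i h1 h2; interval_cases i <;> decide

lemma conf_Wa2 : IsConformation 7 Wa2 := by
  constructor
  · intro a ha b hb hab
    obtain ⟨ha1, ha2⟩ := Set.mem_Icc.mp ha
    obtain ⟨hb1, hb2⟩ := Set.mem_Icc.mp hb
    interval_cases a <;> interval_cases b <;> first | rfl | (exact absurd hab (by decide))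
  · intro i h1 h2; interval_cases i <;> decide

lemma conf_Wa3 : IsConformation 7 Wa3 := by
  constructor
  · intro a ha b hb hab
    obtain ⟨ha1, ha2⟩ := Set.mem_Icc.mp ha
    obtain ⟨hb1, hb2⟩ := Set.mem_Icc.mp hb
    interval_cases a <;> interval_cases b <;> first | rfl | (exact absurd hab (by decide))
  · intro i h1 h2; interval_cases i <;> decide



lemma real_r1_l1_r1 :
    ∃ Γ : ℕ → P3, IsMinimal 7 Γ ∧ HasType (window Γ 3) DType.r1 ∧
      HasType (window Γ 4) DType.l1 ∧ HasType (window Γ 5) DType.r1 := by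
  have h3 : HasType (window Wb0 3) DType.r1 := ⟨!![1,0,0;0,1,0;0,0,1], ![0,0,0], ⟨by decide, by decide⟩, by decide⟩
  have h4 : HasType (window Wb0 4) DType.l1 := ⟨!![-1,0,0;0,0,-1;0,-1,0], ![1,1,1], ⟨by decide, by decide⟩, by decide⟩
  have h5 : HasType (window Wb0 5) DType.r1 := ⟨!![-1,0,0;0,0,1;0,1,0], ![1,0,-1], ⟨by decide, by decide⟩, by decide⟩
  refine ⟨Wb0, ⟨conf_Wb0, ?_⟩, h3, h4, h5⟩
  intro i hi1 hi2
  interval_cases i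
  · exact goodOf h3
  · exact goodOf h4
  · exact goodOf h5



lemma real_l1_r1_l1 :
    ∃ Γ : ℕ → P3, IsMinimal 7 Γ ∧ HasType (window Γ 3) DType.l1 ∧
      HasType (window Γ 4) DType.r1 ∧ HasType (window Γ 5) DType.l1 := by
  have h3 : HasType (window Wb1 3) DType.l1 := ⟨!![-1,0,0;0,0,-1;0,-1,0], ![0,1,1], ⟨by decide, by decide⟩, by decide⟩
  have h4 : HasType (window Wb1 4) DType.r1 := ⟨!![-1,0,0;0,0,1;0,1,0], ![0,0,-1], ⟨by decide, by decide⟩, by decide⟩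
  have h5 : HasType (window Wb1 5) DType.l1 := ⟨!![1,0,0;0,-1,0;0,0,-1], ![1,2,1], ⟨by decide, by decide⟩, by decide⟩
  refine ⟨Wb1, ⟨conf_Wb1, ?_⟩, h3, h4, h5⟩
  intro i hi1 hi2
  interval_cases i
  · exact goodOf h3
  · exact goodOf h4
  · exact goodOf h5



lemma real_r1_r2_l2 :
    ∃ Γ : ℕ → P3, IsMinimal 7 Γ ∧ HasType (window Γ 3) DType.r1 ∧
      HasType (window Γ 4) DType.r2 ∧ HasType (window Γ 5) DType.l2 := by
  have h3 : HasType (window Wa0 3) DType.r1 := ⟨!![1,0,0;0,1,0;0,0,1], ![0,0,0], ⟨by decide, by decide⟩, by decide⟩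
  have h4 : HasType (window Wa0 4) DType.r2 := ⟨!![1,0,0;0,1,0;0,0,1], ![-1,0,0], ⟨by decide, by decide⟩, by decide⟩
  have h5 : HasType (window Wa0 5) DType.l2 := ⟨!![0,-1,0;-1,0,0;0,0,-1], ![0,1,1], ⟨by decide, by decide⟩, by decide⟩
  refine ⟨Wa0, ⟨conf_Wa0, ?_⟩, h3, h4, h5⟩
  intro i hi1 hi2
  interval_cases i
  · exact goodOf h3
  · exact goodOf h4
  · exact goodOf h5



lemma real_r2_l2_l1 :
    ∃ Γ : ℕ → P3, IsMinimal 7 Γ ∧ HasType (window Γ 3) DType.r2 ∧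
      HasType (window Γ 4) DType.l2 ∧ HasType (window Γ 5) DType.l1 := by
  have h3 : HasType (window Wa1 3) DType.r2 := ⟨!![1,0,0;0,1,0;0,0,1], ![0,0,0], ⟨by decide, by decide⟩, by decide⟩
  have h4 : HasType (window Wa1 4) DType.l2 := ⟨!![0,-1,0;-1,0,0;0,0,-1], ![0,0,1], ⟨by decide, by decide⟩, by decide⟩
  have h5 : HasType (window Wa1 5) DType.l1 := ⟨!![0,-1,0;-1,0,0;0,0,-1], ![1,0,1], ⟨by decide, by decide⟩, by decide⟩
  refine ⟨Wa1, ⟨conf_Wa1, ?_⟩, h3, h4, h5⟩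
  intro i hi1 hi2
  interval_cases i
  · exact goodOf h3
  · exact goodOf h4
  · exact goodOf h5



lemma real_l2_l1_r1 :
    ∃ Γ : ℕ → P3, IsMinimal 7 Γ ∧ HasType (window Γ 3) DType.l2 ∧
      HasType (window Γ 4) DType.l1 ∧ HasType (window Γ 5) DType.r1 := by
  have h3 : HasType (window Wa2 3) DType.l2 := ⟨!![0,-1,0;-1,0,0;0,0,-1], ![-1,0,1], ⟨by decide, by decide⟩, by decide⟩
  have h4 : HasType (window Wa2 4) DType.l1 := ⟨!![0,-1,0;-1,0,0;0,0,-1], ![0,0,1], ⟨by decide, by decide⟩, by decide⟩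
  have h5 : HasType (window Wa2 5) DType.r1 := ⟨!![0,-1,0;1,0,0;0,0,1], ![0,1,-1], ⟨by decide, by decide⟩, by decide⟩
  refine ⟨Wa2, ⟨conf_Wa2, ?_⟩, h3, h4, h5⟩
  intro i hi1 hi2
  interval_cases i
  · exact goodOf h3
  · exact goodOf h4
  · exact goodOf h5



lemma real_l1_r1_r2 :
    ∃ Γ : ℕ → P3, IsMinimal 7 Γ ∧ HasType (window Γ 3) DType.l1 ∧
      HasType (window Γ 4) DType.r1 ∧ HasType (window Γ 5) DType.r2 := by
  have h3 : HasType (window Wa3 3) DType.l1 := ⟨!![0,-1,0;-1,0,0;0,0,-1], ![0,1,1], ⟨by decide, by decide⟩, by decide⟩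
  have h4 : HasType (window Wa3 4) DType.r1 := ⟨!![0,-1,0;1,0,0;0,0,1], ![0,0,-1], ⟨by decide, by decide⟩, by decide⟩
  have h5 : HasType (window Wa3 5) DType.r2 := ⟨!![0,-1,0;1,0,0;0,0,1], ![-1,0,-1], ⟨by decide, by decide⟩, by decide⟩
  refine ⟨Wa3, ⟨conf_Wa3, ?_⟩, h3, h4, h5⟩
  intro i hi1 hi2
  interval_cases i
  · exact goodOf h3
  · exact goodOf h4
  · exact goodOf h5
lemma transport_fwd (Γ : ℕ → P3) (i : ℕ) (R0 R1 : Matrix (Fin 3) (Fin 3) ℤ) (t0 t1 : P3)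
    (hR0 : R0.transpose * R0 = 1)
    (h : ∀ k, conf2 k = R1.mulVec (window Γ i k) + t1) :
    ∃ (S : Matrix (Fin 3) (Fin 3) ℤ) (u : P3), ∀ (m : Fin 5) (j : ℕ), j = i - 2 + m.val →
      conf2 m = S.mulVec (R0.mulVec (Γ j) + t0) + u := by
  refine ⟨R1 * R0.transpose, t1 - (R1 * R0.transpose).mulVec t0, ?_⟩
  intro m j hj
  have e : window Γ i m = Γ j := by
    show Γ (i - 2 + (m : ℕ)) = Γ j
    rw [hj]
  have h' := h m
  rw [e] at h'
  rw [h', Matrix.mulVec_add, Matrix.mulVec_mulVec, mul_assoc, hR0, mul_one]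
  abel

lemma transport_rev (Γ : ℕ → P3) (i : ℕ) (hi : 2 ≤ i) (R0 R1 : Matrix (Fin 3) (Fin 3) ℤ)
    (t0 t1 : P3) (hR0 : R0.transpose * R0 = 1)
    (h : ∀ k, conf2 k = R1.mulVec (rev5 (window Γ i) k) + t1) :
    ∃ (S : Matrix (Fin 3) (Fin 3) ℤ) (u : P3), ∀ (m : Fin 5) (j : ℕ), j = i + 2 - m.val →
      conf2 m = S.mulVec (R0.mulVec (Γ j) + t0) + u := by
  refine ⟨R1 * R0.transpose, t1 - (R1 * R0.transpose).mulVec t0, ?_⟩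
  intro m j hj
  have e : rev5 (window Γ i) m = Γ j := by
    have h2 : i - 2 + ((m.rev : Fin 5) : ℕ) = j := by
      have h1 := m.isLt
      rw [Fin.val_rev]; omega
    show Γ (i - 2 + (m.rev : ℕ)) = Γ j
    rw [h2]
  have h' := h m
  rw [e] at h'
  rw [h', Matrix.mulVec_add, Matrix.mulVec_mulVec, mul_assoc, hR0, mul_one]
  abel

lemma no_rlr (Γ : ℕ → P3) (hc : IsConformation 7 Γ)
    (h3 : Equiv5 (window Γ 3) conf2) (h4 : Equiv5 (rev5 (window Γ 4)) conf2)
    (h5 : Equiv5 (window Γ 5) conf2) : False := by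
  obtain ⟨hinj, -⟩ := hc
  obtain ⟨R0, t0, ⟨hR0, -⟩, h3⟩ := h3
  obtain ⟨R1, t1, -, h4⟩ := h4
  obtain ⟨R2, t2, -, h5⟩ := h5
  have hinv : ∀ v : P3, R0.transpose.mulVec (R0.mulVec v) = v := by
    intro v; rw [Matrix.mulVec_mulVec, hR0, Matrix.one_mulVec]
  have hG1 : R0.mulVec (Γ 1) + t0 = conf2 0 := (h3 0).symm
  have hG2 : R0.mulVec (Γ 2) + t0 = conf2 1 := (h3 1).symm
  have hG3 : R0.mulVec (Γ 3) + t0 = conf2 2 := (h3 2).symm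
  have hG4 : R0.mulVec (Γ 4) + t0 = conf2 3 := (h3 3).symm
  have hG5 : R0.mulVec (Γ 5) + t0 = conf2 4 := (h3 4).symm
  obtain ⟨q, hq⟩ : ∃ q : P3, R0.mulVec (Γ 6) + t0 = q := ⟨_, rfl⟩
  obtain ⟨r, hr⟩ : ∃ r : P3, R0.mulVec (Γ 7) + t0 = r := ⟨_, rfl⟩
  -- window 4 (reversed)
  obtain ⟨S, u, hT⟩ := transport_rev Γ 4 (by norm_num) R0 R1 t0 t1 hR0 h4
  have hA := hT 1 5 (by decide); rw [hG5] at hA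
  have hB := hT 2 4 (by decide); rw [hG4] at hB
  have hC := hT 3 3 (by decide); rw [hG3] at hC
  have hD := hT 4 2 (by decide); rw [hG2] at hD
  have hX := hT 0 6 (by decide); rw [hq] at hX
  have a0 := congrFun hA 0; have a1 := congrFun hA 1; have a2 := congrFun hA 2
  have b0 := congrFun hB 0; have b1 := congrFun hB 1; have b2 := congrFun hB 2
  have c0 := congrFun hC 0; have c1 := congrFun hC 1; have c2 := congrFun hC 2
  have d0 := congrFun hD 0; have d1 := congrFun hD 1; have d2 := congrFun hD 2
  have x0 := congrFun hX 0; have x1 := congrFun hX 1; have x2 := congrFun hX 2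
  simp [conf2, Matrix.mulVec, dotProduct, Fin.sum_univ_three, Matrix.vecHead, Matrix.vecTail] at a0 a1 a2 b0 b1 b2 c0 c1 c2 d0 d1 d2 x0 x1 x2
  have s00 : S 0 0 = 0 := by omega
  have s01 : S 0 1 = -1 := by omega
  have s02 : S 0 2 = 0 := by omega
  have s10 : S 1 0 = -1 := by omega
  have s11 : S 1 1 = 0 := by omega
  have s12 : S 1 2 = 0 := by omega
  have s20 : S 2 0 = 0 := by omega
  have s21 : S 2 1 = 0 := by omega
  have s22 : S 2 2 = -1 := by omega
  have u0 : u 0 = 0 := by omega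
  have u1 : u 1 = 0 := by omega
  have u2 : u 2 = 1 := by omega
  rw [s00, s01, s02, u0] at x0
  rw [s10, s11, s12, u1] at x1
  rw [s20, s21, s22, u2] at x2
  have hq0 : q 0 = 0 := by omega
  have hq1 : q 1 = 0 := by omega
  have hq2 : q 2 = 1 := by omega
  -- window 5 (forward)
  obtain ⟨T, v, hU⟩ := transport_fwd Γ 5 R0 R2 t0 t2 hR0 h5
  have hE := hU 0 3 (by decide); rw [hG3] at hE
  have hF := hU 1 4 (by decide); rw [hG4] at hF
  have hG' := hU 2 5 (by decide); rw [hG5] at hG'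
  have hH := hU 3 6 (by decide); rw [hq] at hH
  have hY := hU 4 7 (by decide); rw [hr] at hY
  have e0 := congrFun hE 0; have e1 := congrFun hE 1; have e2 := congrFun hE 2
  have f0 := congrFun hF 0; have f1 := congrFun hF 1; have f2 := congrFun hF 2
  have g0 := congrFun hG' 0; have g1 := congrFun hG' 1; have g2 := congrFun hG' 2
  have k0 := congrFun hH 0; have k1 := congrFun hH 1; have k2 := congrFun hH 2
  have y0 := congrFun hY 0; have y1 := congrFun hY 1; have y2 := congrFun hY 2
  simp [conf2, Matrix.mulVec, dotProduct, Fin.sum_univ_three, Matrix.vecHead, Matrix.vecTail] at e0 e1 e2 f0 f1 f2 g0 g1 g2 k0 k1 k2 y0 y1 y2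
  rw [hq0, hq1, hq2] at k0 k1 k2
  have t00 : T 0 0 = 0 := by omega
  have t01 : T 0 1 = 1 := by omega
  have t02 : T 0 2 = 0 := by omega
  have t10 : T 1 0 = 0 := by omega
  have t11 : T 1 1 = 0 := by omega
  have t12 : T 1 2 = 1 := by omega
  have t20 : T 2 0 = 1 := by omega
  have t21 : T 2 1 = 0 := by omega
  have t22 : T 2 2 = 0 := by omega
  have v0 : v 0 = -1 := by omega
  have v1 : v 1 = 0 := by omega
  have v2 : v 2 = 1 := by omega
  rw [t00, t01, t02, v0] at y0
  rw [t10, t11, t12, v1] at y1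
  rw [t20, t21, t22, v2] at y2
  have hr0 : r 0 = 0 := by omega
  have hr1 : r 1 = 0 := by omega
  have hr2 : r 2 = 0 := by omega
  -- conclude Γ 7 = Γ 1
  have hrc : r = conf2 0 := by
    funext i
    fin_cases i
    · simpa [conf2] using hr0
    · simpa [conf2] using hr1
    · simpa [conf2] using hr2
  have key : R0.mulVec (Γ 7) = R0.mulVec (Γ 1) := by
    have e' : R0.mulVec (Γ 7) + t0 = R0.mulVec (Γ 1) + t0 := by
      rw [hr, hG1]; exact hrc
    exact add_right_cancel e'
  have h71 : Γ 7 = Γ 1 := by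
    have a := hinv (Γ 7)
    have b := hinv (Γ 1)
    rw [← a, ← b, key]
  have : (7 : ℕ) = 1 :=
    hinj (Set.mem_Icc.mpr (by omega)) (Set.mem_Icc.mpr (by omega)) h71
  omega
lemma no_lrl (Γ : ℕ → P3) (hc : IsConformation 7 Γ)
    (h3 : Equiv5 (rev5 (window Γ 3)) conf2) (h4 : Equiv5 (window Γ 4) conf2)
    (h5 : Equiv5 (rev5 (window Γ 5)) conf2) : False := by
  obtain ⟨hinj, -⟩ := hc
  obtain ⟨R1, t1, -, h3⟩ := h3
  obtain ⟨R0, t0, ⟨hR0, -⟩, h4⟩ := h4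
  obtain ⟨R2, t2, -, h5⟩ := h5
  have hinv : ∀ v : P3, R0.transpose.mulVec (R0.mulVec v) = v := by
    intro v; rw [Matrix.mulVec_mulVec, hR0, Matrix.one_mulVec]
  have hG2 : R0.mulVec (Γ 2) + t0 = conf2 0 := (h4 0).symm
  have hG3 : R0.mulVec (Γ 3) + t0 = conf2 1 := (h4 1).symm
  have hG4 : R0.mulVec (Γ 4) + t0 = conf2 2 := (h4 2).symm
  have hG5 : R0.mulVec (Γ 5) + t0 = conf2 3 := (h4 3).symm
  have hG6 : R0.mulVec (Γ 6) + t0 = conf2 4 := (h4 4).symm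
  obtain ⟨p, hp⟩ : ∃ p : P3, R0.mulVec (Γ 1) + t0 = p := ⟨_, rfl⟩
  obtain ⟨r, hr⟩ : ∃ r : P3, R0.mulVec (Γ 7) + t0 = r := ⟨_, rfl⟩
  -- window 3 (reversed): j = 5 - m
  obtain ⟨S, u, hT⟩ := transport_rev Γ 3 (by norm_num) R0 R1 t0 t1 hR0 h3
  have hA := hT 0 5 (by decide); rw [hG5] at hA
  have hB := hT 1 4 (by decide); rw [hG4] at hB
  have hC := hT 2 3 (by decide); rw [hG3] at hC
  have hD := hT 3 2 (by decide); rw [hG2] at hD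
  have hX := hT 4 1 (by decide); rw [hp] at hX
  have a0 := congrFun hA 0; have a1 := congrFun hA 1; have a2 := congrFun hA 2
  have b0 := congrFun hB 0; have b1 := congrFun hB 1; have b2 := congrFun hB 2
  have c0 := congrFun hC 0; have c1 := congrFun hC 1; have c2 := congrFun hC 2
  have d0 := congrFun hD 0; have d1 := congrFun hD 1; have d2 := congrFun hD 2
  have x0 := congrFun hX 0; have x1 := congrFun hX 1; have x2 := congrFun hX 2
  simp [conf2, Matrix.mulVec, dotProduct, Fin.sum_univ_three, Matrix.vecHead, Matrix.vecTail] at a0 a1 a2 b0 b1 b2 c0 c1 c2 d0 d1 d2 x0 x1 x2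
  have s00 : S 0 0 = -1 := by omega
  have s01 : S 0 1 = 0 := by omega
  have s02 : S 0 2 = 0 := by omega
  have s10 : S 1 0 = 0 := by omega
  have s11 : S 1 1 = 0 := by omega
  have s12 : S 1 2 = -1 := by omega
  have s20 : S 2 0 = 0 := by omega
  have s21 : S 2 1 = -1 := by omega
  have s22 : S 2 2 = 0 := by omega
  have u0 : u 0 = -1 := by omega
  have u1 : u 1 = 1 := by omega
  have u2 : u 2 = 1 := by omega
  rw [s00, s01, s02, u0] at x0
  rw [s10, s11, s12, u1] at x1
  rw [s20, s21, s22, u2] at x2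
  have hp0 : p 0 = 0 := by omega
  have hp1 : p 1 = 0 := by omega
  have hp2 : p 2 = 1 := by omega
  -- window 5 (reversed): j = 7 - m
  obtain ⟨T, v, hU⟩ := transport_rev Γ 5 (by norm_num) R0 R2 t0 t2 hR0 h5
  have hE := hU 1 6 (by decide); rw [hG6] at hE
  have hF := hU 2 5 (by decide); rw [hG5] at hF
  have hG' := hU 3 4 (by decide); rw [hG4] at hG'
  have hH := hU 4 3 (by decide); rw [hG3] at hH
  have hY := hU 0 7 (by decide); rw [hr] at hY
  have e0 := congrFun hE 0; have e1 := congrFun hE 1; have e2 := congrFun hE 2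
  have f0 := congrFun hF 0; have f1 := congrFun hF 1; have f2 := congrFun hF 2
  have g0 := congrFun hG' 0; have g1 := congrFun hG' 1; have g2 := congrFun hG' 2
  have k0 := congrFun hH 0; have k1 := congrFun hH 1; have k2 := congrFun hH 2
  have y0 := congrFun hY 0; have y1 := congrFun hY 1; have y2 := congrFun hY 2
  simp [conf2, Matrix.mulVec, dotProduct, Fin.sum_univ_three, Matrix.vecHead, Matrix.vecTail] at e0 e1 e2 f0 f1 f2 g0 g1 g2 k0 k1 k2 y0 y1 y2
  have t00 : T 0 0 = 0 := by omega
  have t01 : T 0 1 = -1 := by omega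
  have t02 : T 0 2 = 0 := by omega
  have t10 : T 1 0 = -1 := by omega
  have t11 : T 1 1 = 0 := by omega
  have t12 : T 1 2 = 0 := by omega
  have t20 : T 2 0 = 0 := by omega
  have t21 : T 2 1 = 0 := by omega
  have t22 : T 2 2 = -1 := by omega
  have v0 : v 0 = 0 := by omega
  have v1 : v 1 = 0 := by omega
  have v2 : v 2 = 1 := by omega
  rw [t00, t01, t02, v0] at y0
  rw [t10, t11, t12, v1] at y1
  rw [t20, t21, t22, v2] at y2
  have hr0 : r 0 = 0 := by omega
  have hr1 : r 1 = 0 := by omega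
  have hr2 : r 2 = 1 := by omega
  have hrp : r = p := by
    funext i
    fin_cases i
    · rw [show (⟨0, by omega⟩ : Fin 3) = (0 : Fin 3) from rfl, hr0, hp0]
    · rw [show (⟨1, by omega⟩ : Fin 3) = (1 : Fin 3) from rfl, hr1, hp1]
    · rw [show (⟨2, by omega⟩ : Fin 3) = (2 : Fin 3) from rfl, hr2, hp2]
  have key : R0.mulVec (Γ 7) = R0.mulVec (Γ 1) := by
    have e' : R0.mulVec (Γ 7) + t0 = R0.mulVec (Γ 1) + t0 := by
      rw [hr, hp]; exact hrp
    exact add_right_cancel e'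
  have h71 : Γ 7 = Γ 1 := by
    have a := hinv (Γ 7)
    have b := hinv (Γ 1)
    rw [← a, ← b, key]
  have : (7 : ℕ) = 1 :=
    hinj (Set.mem_Icc.mpr (by omega)) (Set.mem_Icc.mpr (by omega)) h71
  omega

/-- among the ordered triples `(X,Y,Z)` with `(X,Y)` and `(Y,Z)`
allowed, exactly those different from (→2,←2,→2) and (←2,→2,←2) are realized
as the types of the three windows of a minimal conformation of length 7. -/
theorem triples_realized (X Y Z : DType)
    (hXY : (X, Y) ∈ allowedPairs) (hYZ : (Y, Z) ∈ allowedPairs) :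
    (∃ Γ : ℕ → P3, IsMinimal 7 Γ ∧ HasType (window Γ 3) X ∧
        HasType (window Γ 4) Y ∧ HasType (window Γ 5) Z) ↔
      ¬((X, Y, Z) = (DType.r2, DType.l2, DType.r2) ∨
        (X, Y, Z) = (DType.l2, DType.r2, DType.l2)) := by
  constructor
  · rintro ⟨Γ, hmin, h3, h4, h5⟩ h
    rcases h with h | h
    · obtain ⟨rfl, rfl, rfl⟩ : X = DType.r2 ∧ Y = DType.l2 ∧ Z = DType.r2 := by
        simpa [Prod.ext_iff] using h
      exact no_rlr Γ hmin.1 h3 h4 h5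
    · obtain ⟨rfl, rfl, rfl⟩ : X = DType.l2 ∧ Y = DType.r2 ∧ Z = DType.l2 := by
        simpa [Prod.ext_iff] using h
      exact no_lrl Γ hmin.1 h3 h4 h5
  · intro hbad
    simp only [allowedPairs, List.mem_cons, List.not_mem_nil, or_false,
      Prod.mk.injEq] at hXY hYZ
    rcases hXY with ⟨rfl, rfl⟩ | ⟨rfl, rfl⟩ | ⟨rfl, rfl⟩ | ⟨rfl, rfl⟩ | ⟨rfl, rfl⟩ | ⟨rfl, rfl⟩ <;>
      rcases hYZ with ⟨h, rfl⟩ | ⟨h, rfl⟩ | ⟨h, rfl⟩ | ⟨h, rfl⟩ | ⟨h, rfl⟩ | ⟨h, rfl⟩ <;>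
        first
          | exact absurd h (by decide)
          | exact real_r1_l1_r1
          | exact real_l1_r1_l1
          | exact real_r1_r2_l2
          | exact real_r2_l2_l1
          | exact real_l2_l1_r1
          | exact real_l1_r1_r2
          | exact absurd (Or.inl rfl) hbad
          | exact absurd (Or.inr rfl) hbad
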